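/- For every dimension d ≥ 1 there exists a constant C_d ≥ 1, depending only on d, with the following property: for every h > 0 and every set P ⊆ ℝ^d such that every closed axis-aligned cube in ℝ^d of side length h/C_d contains at least one point of P, and for all x, y ∈ ℝ^d with |x − y| ≥ h, one has d_{h,P}(x,y) ≤ C_d |x − y|. -/

import Mathlib

open scoped ENNReal

noncomputable section

/-- A point in Euclidean space `ℝ^d`. -/
abbrev Pt (d : ℕ) := EuclideanSpace ℝ (Fin d)

/-- `p = (p₀, …, p_m)` is an admissible path in `P` from `x` to `y` with step size `h`:
all its points lie in `P`, the first point is within `h/2` of `x`, the last within `h/2`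
of `y`, and consecutive points are at distance at most `h`. (A path with `m + 1` points
corresponds to a path with `m` elements in the paper, which is always nonempty.) -/
def IsPath {d : ℕ} (P : Set (Pt d)) (h : ℝ) (x y : Pt d) {m : ℕ}
    (p : Fin (m + 1) → Pt d) : Prop :=
  (∀ i, p i ∈ P) ∧ dist x (p 0) ≤ h / 2 ∧ dist y (p (Fin.last m)) ≤ h / 2 ∧
    ∀ i : Fin m, dist (p i.castSucc) (p i.succ) ≤ h

/-- The length `L(p)` of a path: the sum of the lengths of its hops. -/
def pathLength {d m : ℕ} (p : Fin (m + 1) → Pt d) : ℝ :=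
  ∑ i : Fin m, dist (p i.castSucc) (p i.succ)

/-- The distance `d_{h,P}(x,y) ∈ [0,∞]`: the infimum of the lengths of admissible
paths in `P` from `x` to `y` with step size `h` (equal to `+∞` if there is none). -/
def graphDist {d : ℕ} (P : Set (Pt d)) (h : ℝ) (x y : Pt d) : ℝ≥0∞ :=
  ⨅ (m : ℕ) (p : Fin (m + 1) → Pt d) (_ : IsPath P h x y p),
    ENNReal.ofReal (pathLength p)

/-- **Upper bound.** For every dimension `d ≥ 1` there is a constant `C_d ≥ 1`,
depending only on `d`, such that: for every `h > 0` and every set `P ⊆ ℝ^d` with the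
property that every closed axis-aligned cube of side length `h / C_d` contains a
point of `P`, and all `x, y` with `|x - y| ≥ h`, one has `d_{h,P}(x,y) ≤ C_d |x - y|`. -/
theorem graphDist_upper_bound :
    ∀ d : ℕ, 1 ≤ d → ∃ C : ℝ, 1 ≤ C ∧
      ∀ h : ℝ, 0 < h → ∀ P : Set (Pt d),
        (∀ a : Pt d, ∃ q ∈ P, ∀ i, q i ∈ Set.Icc (a i) (a i + h / C)) →
        ∀ x y : Pt d, h ≤ dist x y →
          graphDist P h x y ≤ ENNReal.ofReal (C * dist x y) := by
  intro d hd
  have hd1 : (1:ℝ) ≤ (d:ℝ) := by exact_mod_cast hd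
  refine ⟨4 * d, by nlinarith, ?_⟩
  intro h hh P hP x y hxy
  have hDpos : 0 < dist x y := lt_of_lt_of_le hh hxy
  set D := dist x y with hDdef
  -- every point has a P-point within h/4
  have hnear : ∀ a : Pt d, ∃ q ∈ P, dist a q ≤ h / 4 := by
    intro a
    obtain ⟨q, hqP, hq⟩ := hP a
    refine ⟨q, hqP, ?_⟩
    rw [EuclideanSpace.dist_eq]
    have hb : ∀ i, dist (a i) (q i) ≤ h / (4 * d) := by
      intro i
      have h2 := hq i
      rw [Set.mem_Icc] at h2
      rw [Real.dist_eq, abs_le]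
      constructor <;> [linarith [h2.2]; linarith [h2.1]]
    have hsum : ∑ i, dist (a i) (q i) ^ 2 ≤ (d:ℝ) * (h / (4 * d)) ^ 2 := by
      calc ∑ i, dist (a i) (q i) ^ 2 ≤ ∑ _i : Fin d, (h / (4 * d)) ^ 2 :=
            Finset.sum_le_sum fun i _ => by
              have := hb i
              nlinarith [dist_nonneg (x := a i) (y := q i)]
        _ = (d:ℝ) * (h / (4 * d)) ^ 2 := by simp [mul_comm]
    have h3 : (d:ℝ) * (h / (4 * d)) ^ 2 ≤ (h / 4) ^ 2 := by
      have hdpos : (0:ℝ) < d := by linarith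
      have he : (d:ℝ) * (h / (4 * d)) ^ 2 = h ^ 2 / (16 * d) := by
        field_simp; ring
      rw [he, div_pow, div_le_div_iff₀ (by positivity) (by norm_num)]
      nlinarith [sq_nonneg h]
    calc Real.sqrt (∑ i, dist (a i) (q i) ^ 2) ≤ Real.sqrt ((h/4)^2) :=
          Real.sqrt_le_sqrt (hsum.trans h3)
      _ = h / 4 := Real.sqrt_sq (by positivity)
  -- number of steps
  set N : ℕ := ⌈2 * D / h⌉₊ with hNdef
  have hNpos : 0 < N := Nat.ceil_pos.mpr (by positivity)
  have hNR : (0:ℝ) < N := by exact_mod_cast hNpos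
  have hNge : 2 * D / h ≤ N := Nat.le_ceil _
  have hNle : (N:ℝ) ≤ 2 * D / h + 1 := le_of_lt (Nat.ceil_lt_add_one (by positivity))
  have hstep : D / N ≤ h / 2 := by
    rw [div_le_div_iff₀ hNR (by norm_num)]
    have : 2 * D ≤ h * N := by
      rw [div_le_iff₀ hh] at hNge
      linarith
    linarith
  -- the intermediate points
  set z : ℕ → Pt d := fun k => x + ((k:ℝ) / N) • (y - x) with hzdef
  have hz0 : z 0 = x := by simp [hzdef]
  have hzN : z N = y := by
    simp only [hzdef, div_self (ne_of_gt hNR), one_smul]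
    abel
  have hzd : ∀ k : ℕ, dist (z k) (z (k + 1)) = D / N := by
    intro k
    have he : z k - z (k + 1) = (((k:ℝ) / N) - (((k:ℕ) + 1 : ℝ) / N)) • (y - x) := by
      simp [hzdef, add_sub_add_left_eq_sub, sub_smul]
    rw [dist_eq_norm, he, norm_smul]
    have : ((k:ℝ) / N) - (((k:ℕ) + 1 : ℝ) / N) = -(1 / N) := by
      field_simp
      ring
    rw [this, Real.norm_eq_abs, abs_neg, abs_of_nonneg (by positivity), ← dist_eq_norm, dist_comm]
    rw [← hDdef]
    ring
  -- choose path points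
  choose f hfP hfd using hnear
  set p : Fin (N + 1) → Pt d := fun i => f (z i) with hpdef
  have hpath : IsPath P h x y p := by
    refine ⟨fun i => hfP _, ?_, ?_, ?_⟩
    · have := hfd (z 0)
      rw [hz0] at this
      simpa [hpdef, hz0] using this.trans (by linarith)
    · have := hfd (z N)
      rw [hzN] at this
      have hlast : p (Fin.last N) = f (z N) := by simp [hpdef, Fin.last]
      rw [hlast]
      calc dist y (f (z N)) = dist (z N) (f (z N)) := by rw [hzN]
        _ ≤ h / 4 := hfd _
        _ ≤ h / 2 := by linarith
    · intro i
      have h1 : dist (p i.castSucc) (z i) ≤ h / 4 := by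
        rw [dist_comm]; simpa [hpdef] using hfd (z i)
      have h2 : dist (z (i + 1)) (p i.succ) ≤ h / 4 := by
        simpa [hpdef] using hfd (z (i + 1))
      calc dist (p i.castSucc) (p i.succ)
          ≤ dist (p i.castSucc) (z i) + dist (z i) (z (i+1)) + dist (z (i+1)) (p i.succ) :=
            dist_triangle4 _ _ _ _
        _ ≤ h / 4 + D / N + h / 4 := by
            have := hzd i
            gcongr <;> simp [this]
        _ ≤ h / 4 + h / 2 + h / 4 := by linarith
        _ = h := by ring
  -- length bound
  have hlen : pathLength p ≤ N * h := by
    rw [pathLength]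
    calc ∑ i : Fin N, dist (p i.castSucc) (p i.succ) ≤ ∑ _i : Fin N, h :=
          Finset.sum_le_sum fun i _ => hpath.2.2.2 i
      _ = N * h := by simp [mul_comm]
  have hNh : (N:ℝ) * h ≤ 4 * d * D := by
    have : (N:ℝ) * h ≤ (2 * D / h + 1) * h := by
      apply mul_le_mul_of_nonneg_right hNle (le_of_lt hh)
    rw [add_mul, div_mul_cancel₀ _ (ne_of_gt hh)] at this
    nlinarith
  calc graphDist P h x y ≤ ENNReal.ofReal (pathLength p) :=
        iInf_le_of_le N (iInf_le_of_le p (iInf_le_of_le hpath le_rfl))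
    _ ≤ ENNReal.ofReal (4 * d * D) := ENNReal.ofReal_le_ofReal (hlen.trans hNh)
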